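/- arXiv:0907.0602 — 12 statements merged into one kernel-verified Lean document; each statement's English description precedes it below -/
import Mathlib

section
/- Let X be a topological space, 𝓕 a family of nonempty subsets of X, and λ a singular infinite cardinal. Then X satisfies 𝓕-CAP*_λ if and only if X satisfies both 𝓕-CAP_λ and 𝓕-CAP_{cf λ}, where cf λ denotes the cofinality of λ. -/
open Cardinal Set Topology

universe u

/-- `x` is a `lam`-complete accumulation point of the sequence `Y`. -/
def IsCompleteAccPt {X : Type u} [TopologicalSpace X] (lam : Cardinal.{u})
    {ι : Type u} (Y : ι → Set X) (x : X) : Prop :=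
  ∀ U ∈ nhds x, #{i : ι | (Y i ∩ U).Nonempty} = lam

/-- `X` satisfies `𝓕`-CAP*_λ. -/
def CapStar {X : Type u} [TopologicalSpace X] (F : Set (Set X)) (lam : Cardinal.{u}) : Prop :=
  ∀ Y : lam.ord.ToType → Set X, (∀ i, Y i ∈ F) → ∃ x : X, IsCompleteAccPt lam Y x

/-- `X` satisfies `𝓕`-CAP_λ (distinct members). -/
def Cap {X : Type u} [TopologicalSpace X] (F : Set (Set X)) (lam : Cardinal.{u}) : Prop :=
  ∀ Y : lam.ord.ToType → Set X, (∀ i, Y i ∈ F) → Function.Injective Y →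
    ∃ x : X, IsCompleteAccPt lam Y x

lemma mk_set_toType_le (lam : Cardinal.{u}) (s : Set lam.ord.ToType) : #s ≤ lam :=
  (mk_set_le s).trans_eq (mk_ord_toType lam)

lemma mk_Iic_toType_lt {c : Cardinal.{u}} (hc : ℵ₀ ≤ c) (i : c.ord.ToType) : #(Iic i) < c := by
  have h : (Iic i : Set c.ord.ToType) = Iio i ∪ {i} := by
    ext j; simp [le_iff_lt_or_eq]
  calc #(Iic i) ≤ #(Iio i) + #({i} : Set c.ord.ToType) := by rw [h]; exact mk_union_le _ _
    _ < c := by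
      rw [mk_singleton]
      exact Cardinal.add_lt_of_lt hc (mk_Iio_ord_toType i)
        (lt_of_lt_of_le one_lt_aleph0 hc)

lemma exists_cof_family (lam : Cardinal.{u}) :
    ∃ c : lam.ord.cof.ord.ToType → Cardinal.{u},
      (∀ i, c i < lam) ∧ ∀ β < lam, ∃ i, β ≤ c i := by
  obtain ⟨ι, f, hlsub, hι⟩ := Ordinal.exists_lsub_cof lam.ord
  obtain ⟨e⟩ := Cardinal.eq.1 ((mk_ord_toType lam.ord.cof).trans hι.symm)
  refine ⟨fun i => (f (e i)).card, fun i => ?_, fun β hβ => ?_⟩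
  · rw [← Cardinal.lt_ord]
    exact lt_of_lt_of_eq (Ordinal.lt_lsub f (e i)) hlsub
  · have : β.ord < Ordinal.lsub f := by rw [hlsub]; exact Cardinal.ord_lt_ord.2 hβ
    obtain ⟨i0, hi0⟩ := Ordinal.lt_lsub_iff.1 this
    refine ⟨e.symm i0, ?_⟩
    calc β = β.ord.card := (Cardinal.card_ord β).symm
      _ ≤ (f i0).card := Ordinal.card_le_card hi0
      _ = (f (e (e.symm i0))).card := by rw [e.apply_symm_apply]

lemma forward_cof {X : Type u} [TopologicalSpace X] (F : Set (Set X)) (lam : Cardinal.{u})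
    (hinf : Cardinal.aleph0 ≤ lam) (hsing : lam.ord.cof < lam)
    (hstar : CapStar F lam) : Cap F lam.ord.cof := by
  intro Y hY _
  haveI : IsWellOrder lam.ord.ToType (· < ·) := isWellOrder_lt
  obtain ⟨S, hSunb, hScard⟩ :=
    Order.exists_cof_eq (α := lam.ord.ToType)
  rw [Ordinal.cof_toType] at hScard
  obtain ⟨e⟩ := Cardinal.eq.1 ((mk_ord_toType lam.ord.cof).trans hScard.symm)
  have hg : ∀ α : lam.ord.ToType, ∃ s, s ∈ S ∧ ¬ s < α := fun α =>
    let ⟨s, hs, h⟩ := hSunb α; ⟨s, hs, not_lt.2 h⟩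
  set g : lam.ord.ToType → lam.ord.cof.ord.ToType := fun α =>
    e.symm ⟨(hg α).choose, (hg α).choose_spec.1⟩ with hgdef
  have hfiber : ∀ i : lam.ord.cof.ord.ToType, g ⁻¹' {i} ⊆ Iic (e i : lam.ord.ToType) := by
    intro i α hα
    have h1 : g α = i := hα
    have h2 : (e i : lam.ord.ToType) = (hg α).choose := by
      rw [← h1, hgdef]; simp
    rw [mem_Iic, h2]
    exact not_lt.1 (hg α).choose_spec.2
  obtain ⟨x, hx⟩ := hstar (fun α => Y (g α)) (fun α => hY _)
  refine ⟨x, fun U hU => ?_⟩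
  have hxu : #{α | (Y (g α) ∩ U).Nonempty} = lam := hx U hU
  refine le_antisymm (mk_set_toType_le lam.ord.cof _) (not_lt.1 fun hlt => ?_)
  have hdecomp : {α | (Y (g α) ∩ U).Nonempty} =
      ⋃ i : {i | (Y i ∩ U).Nonempty}, g ⁻¹' {(i : lam.ord.cof.ord.ToType)} := by
    ext α
    simp only [mem_setOf_eq, mem_iUnion, mem_preimage, mem_singleton_iff]
    exact ⟨fun h => ⟨⟨g α, h⟩, rfl⟩, fun ⟨i, hi⟩ => by rw [hi]; exact i.2⟩
  have hle : #{α | (Y (g α) ∩ U).Nonempty} ≤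
      #{i | (Y i ∩ U).Nonempty} * ⨆ i : {i | (Y i ∩ U).Nonempty},
        #(g ⁻¹' {(i : lam.ord.cof.ord.ToType)}) := by
    rw [hdecomp]; exact mk_iUnion_le _
  have hsup : (⨆ i : {i | (Y i ∩ U).Nonempty},
      #(g ⁻¹' {(i : lam.ord.cof.ord.ToType)})) < lam :=
    Ordinal.iSup_lt hlt fun i =>
      (mk_le_mk_of_subset (hfiber _)).trans_lt (mk_Iic_toType_lt hinf _)
  have : lam < lam := by
    calc lam = #{α | (Y (g α) ∩ U).Nonempty} := hxu.symm
      _ ≤ _ := hle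
      _ < lam := Cardinal.mul_lt_of_lt hinf (hlt.trans hsing) hsup
  exact absurd this (lt_irrefl _)

lemma backward_dir {X : Type u} [TopologicalSpace X] (F : Set (Set X))
    (hF : ∀ f ∈ F, f.Nonempty) (lam : Cardinal.{u})
    (hinf : Cardinal.aleph0 ≤ lam) (hsing : lam.ord.cof < lam)
    (hcap : Cap F lam) (hcof : Cap F lam.ord.cof) : CapStar F lam := by
  intro Z hZF
  by_cases h1 : ∃ A, (∃ α, Z α = A) ∧ #{α | Z α = A} = lam
  · -- some member repeated lam many times
    obtain ⟨A, ⟨α0, hα0⟩, hA⟩ := h1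
    obtain ⟨x, hx⟩ := hF A (hα0 ▸ hZF α0)
    refine ⟨x, fun U hU => ?_⟩
    have hsub : {α | Z α = A} ⊆ {α | (Z α ∩ U).Nonempty} := fun α hα =>
      ⟨x, by rw [mem_setOf_eq] at hα; rw [hα]; exact ⟨hx, mem_of_mem_nhds hU⟩⟩
    refine le_antisymm (mk_set_toType_le lam _) ?_
    calc lam = #{α | Z α = A} := hA.symm
      _ ≤ _ := mk_le_mk_of_subset hsub
  push_neg at h1
  have hmlt : ∀ A : Set X, #{α | Z α = A} < lam := by
    intro A
    by_cases hA : ∃ α, Z α = A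
    · exact lt_of_le_of_ne (mk_set_toType_le lam _) (h1 A hA)
    · push_neg at hA
      have : {α | Z α = A} = (∅ : Set lam.ord.ToType) := by
        ext α; simpa using hA α
      rw [this, mk_emptyCollection]
      exact lt_of_lt_of_le aleph0_pos hinf
  by_cases h2 : #(range Z) = lam
  · -- lam many distinct members: use Cap lam
    obtain ⟨b⟩ := Cardinal.eq.1 ((mk_ord_toType lam).trans h2.symm)
    have hYinj : Function.Injective fun i => ((b i : Set X)) := fun i j h =>
      b.injective (Subtype.coe_injective h)
    obtain ⟨x, hx⟩ := hcap (fun i => (b i : Set X))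
      (fun i => by
        obtain ⟨α, hα⟩ := (b i).2
        show (b i : Set X) ∈ F
        exact hα ▸ hZF α) hYinj
    refine ⟨x, fun U hU => ?_⟩
    have hB : #{i | ((b i : Set X) ∩ U).Nonempty} = lam := hx U hU
    refine le_antisymm (mk_set_toType_le lam _) ?_
    have hex : ∀ i : {i | ((b i : Set X) ∩ U).Nonempty},
        ∃ α, Z α = (b (i : lam.ord.ToType) : Set X) := fun i => (b (i : lam.ord.ToType)).2
    choose φ hφ using hex
    have hφmem : ∀ i, φ i ∈ {α | (Z α ∩ U).Nonempty} := fun i => by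
      rw [mem_setOf_eq, hφ]; exact i.2
    have hinj : Function.Injective
        (fun i => (⟨φ i, hφmem i⟩ : {α | (Z α ∩ U).Nonempty})) := ?_
    · calc lam = #{i | ((b i : Set X) ∩ U).Nonempty} := hB.symm
        _ ≤ _ := Cardinal.mk_le_of_injective hinj
    intro i j h
    have h' : φ i = φ j := congrArg Subtype.val h
    have : (b (i : lam.ord.ToType) : Set X) = (b (j : lam.ord.ToType) : Set X) := by
      rw [← hφ i, ← hφ j, h']
    exact Subtype.ext (b.injective (Subtype.coe_injective this))
  · -- fewer than lam distinct members: use Cap cof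
    have hVlt : #(range Z) < lam :=
      lt_of_le_of_ne (mk_range_le.trans_eq (mk_ord_toType lam)) h2
    have hne : Nonempty lam.ord.ToType := by
      rw [Ordinal.toType_nonempty_iff_ne_zero, ne_eq, Cardinal.ord_eq_zero]
      exact (aleph0_pos.trans_le hinf).ne'
    have hVne : Nonempty (range Z) := (range_nonempty Z).to_subtype
    have hcofm : ∀ β < lam, ∃ A, (∃ α, Z α = A) ∧ β < #{α | Z α = A} := by
      intro β hβ
      by_contra hcon
      push_neg at hcon
      have huniv : (univ : Set lam.ord.ToType) =
          ⋃ A : range Z, {α | Z α = (A : Set X)} := by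
        ext α
        simp only [mem_univ, mem_iUnion, mem_setOf_eq, true_iff]
        exact ⟨⟨Z α, mem_range_self α⟩, rfl⟩
      have hle : lam ≤ #(range Z) * ⨆ A : range Z, #{α | Z α = (A : Set X)} := by
        calc lam = #(univ : Set lam.ord.ToType) := by rw [mk_univ, mk_ord_toType]
          _ ≤ _ := by rw [huniv]; exact mk_iUnion_le _
      have hsup : (⨆ A : range Z, #{α | Z α = (A : Set X)}) ≤ β :=
        ciSup_le' fun A => hcon _ A.2
      have : lam < lam := lt_of_le_of_lt hle
        (Cardinal.mul_lt_of_lt hinf hVlt (lt_of_le_of_lt hsup hβ))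
      exact absurd this (lt_irrefl _)
    obtain ⟨c, hclt, hccof⟩ := exists_cof_family lam
    have hK0 : Cardinal.aleph0 ≤ lam.ord.cof :=
      Ordinal.aleph0_le_cof.2 (Cardinal.isSuccLimit_ord hinf)
    have hbound : ∀ (i : lam.ord.cof.ord.ToType) (prev : ∀ j, j < i → Set X),
        max (c i) (⨆ j : Iio i, #{α | Z α = prev j.1 j.2}) < lam := fun i prev =>
      max_lt (hclt i) (Ordinal.iSup_lt (mk_Iio_ord_toType i) fun j => hmlt _)
    let Frec : ∀ i : lam.ord.cof.ord.ToType, (∀ j, j < i → Set X) → Set X :=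
      fun i prev => (hcofm _ (hbound i prev)).choose
    let A : lam.ord.cof.ord.ToType → Set X := IsWellFounded.fix (· < ·) Frec
    have hA : ∀ i, A i = Frec i (fun j _ => A j) := fun i =>
      IsWellFounded.fix_eq (· < ·) Frec i
    have hAspec : ∀ i, (∃ α, Z α = A i) ∧
        max (c i) (⨆ j : Iio i, #{α | Z α = A j.1}) < #{α | Z α = A i} := by
      intro i
      rw [hA i]
      exact (hcofm _ (hbound i fun j _ => A j)).choose_spec
    have hAmono : ∀ j i : lam.ord.cof.ord.ToType, j < i →
        #{α | Z α = A j} < #{α | Z α = A i} := by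
      intro j i hj
      refine lt_of_le_of_lt ?_ (hAspec i).2
      refine le_max_of_le_right ?_
      exact le_ciSup (Cardinal.bddAbove_range _) (⟨j, hj⟩ : Iio i)
    have hAinj : Function.Injective A := by
      intro i j h
      by_contra hne'
      rcases lt_or_gt_of_ne hne' with hij | hij
      · exact (hAmono i j hij).ne (by rw [h])
      · exact (hAmono j i hij).ne (by rw [h])
    obtain ⟨x, hx⟩ := hcof A
      (fun i => by obtain ⟨α, hα⟩ := (hAspec i).1; exact hα ▸ hZF α) hAinj
    refine ⟨x, fun U hU => ?_⟩
    have hB : #{i | (A i ∩ U).Nonempty} = lam.ord.cof := hx U hU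
    refine le_antisymm (mk_set_toType_le lam _) (not_lt.1 fun hlt => ?_)
    obtain ⟨i0, hi0⟩ := hccof _ hlt
    have hex : ∃ i ∈ {i | (A i ∩ U).Nonempty}, i0 < i := by
      by_contra hcon
      push_neg at hcon
      have hsub : {i | (A i ∩ U).Nonempty} ⊆ Iic i0 := fun i hi => hcon i hi
      have hlt2 := (mk_le_mk_of_subset hsub).trans_lt (mk_Iic_toType_lt hK0 i0)
      rw [hB] at hlt2
      exact lt_irrefl _ hlt2
    obtain ⟨i, hiB, hi0i⟩ := hex
    have hchain : #{α | (Z α ∩ U).Nonempty} < #{α | Z α = A i} := by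
      calc #{α | (Z α ∩ U).Nonempty} ≤ c i0 := hi0
        _ < #{α | Z α = A i0} := lt_of_le_of_lt (le_max_left _ _) (hAspec i0).2
        _ ≤ ⨆ j : Iio i, #{α | Z α = A j.1} :=
          le_ciSup (Cardinal.bddAbove_range _) (⟨i0, hi0i⟩ : Iio i)
        _ ≤ max (c i) _ := le_max_right _ _
        _ < #{α | Z α = A i} := (hAspec i).2
    have hsub : {α | Z α = A i} ⊆ {α | (Z α ∩ U).Nonempty} := by
      intro α hα
      obtain ⟨y, hy⟩ := hiB
      exact ⟨y, by rw [mem_setOf_eq] at hα; rw [hα]; exact hy⟩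
    exact absurd (mk_le_mk_of_subset hsub) (not_le.2 hchain)
theorem stmt1 {X : Type u} [TopologicalSpace X] (F : Set (Set X))
    (hF : ∀ f ∈ F, f.Nonempty) (lam : Cardinal.{u})
    (hinf : Cardinal.aleph0 ≤ lam) (hsing : lam.ord.cof < lam) :
    CapStar F lam ↔ (Cap F lam ∧ Cap F lam.ord.cof) := by
  constructor
  · intro hstar
    exact ⟨fun Y hY _ => hstar Y hY, forward_cof F lam hinf hsing hstar⟩
  · rintro ⟨hcap, hcof⟩
    exact backward_dir F hF lam hinf hsing hcap hcof
end

section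
/- Let X be a topological space, 𝓕 a family of nonempty subsets of X, λ a singular cardinal, and (λ_β)_{β < cf λ} a sequence of cardinals strictly smaller than λ with sup_{β < cf λ} λ_β = λ. If X satisfies CAP_{cf λ} and X satisfies 𝓕-CAP_{λ_β} for every β < cf λ, then X satisfies 𝓕-CAP*_λ. -/
open Cardinal Set Topology

universe u

/--  satisfies CAP_μ : every subset of cardinality μ has a complete accumulation point. -/
def CapSet (X : Type u) [TopologicalSpace X] (mu : Cardinal.{u}) : Prop :=
  ∀ Y : Set X, #Y = mu → ∃ x : X, ∀ U ∈ nhds x, #(↥(Y ∩ U)) = #(↥Y)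

theorem stmt2 {X : Type u} [TopologicalSpace X] (F : Set (Set X))
    (hF : ∀ f ∈ F, f.Nonempty) (lam : Cardinal.{u})
    (hinf : Cardinal.aleph0 ≤ lam) (hsing : lam.ord.cof < lam)
    (l : (lam.ord.cof).ord.ToType → Cardinal.{u})
    (hl : ∀ β, l β < lam) (hsup : (⨆ β, l β) = lam)
    (h1 : CapSet X lam.ord.cof)
    (h2 : ∀ β, Cap F (l β)) :
    CapStar F lam := by
  intro Y hY
  have hκinf : ℵ₀ ≤ lam.ord.cof := Ordinal.aleph0_le_cof.2 (Cardinal.isSuccLimit_ord hinf)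
  have hκreg : (lam.ord.cof).IsRegular := Cardinal.isRegular_cof (Cardinal.isSuccLimit_ord hinf)
  have hmkL : #(lam.ord.ToType) = lam := by rw [Cardinal.mk_toType, Cardinal.card_ord]
  have hmkK : #((lam.ord.cof).ord.ToType) = lam.ord.cof := by
    rw [Cardinal.mk_toType, Cardinal.card_ord]
  haveI : Nonempty (lam.ord.cof).ord.ToType := by
    refine Ordinal.toType_nonempty_iff_ne_zero.2 fun h0 => ?_
    have h0' : lam.ord.cof = 0 := by
      rw [← Cardinal.card_ord lam.ord.cof, h0, Ordinal.card_zero]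
    exact absurd h0' (ne_of_gt (aleph0_pos.trans_le hκinf))
  -- upper bound
  have hub : ∀ U : Set X, #{i : lam.ord.ToType | (Y i ∩ U).Nonempty} ≤ lam := fun U =>
    (Cardinal.mk_set_le _).trans_eq hmkL
  -- the monotone cofinal sequence of cardinals
  set c : (lam.ord.cof).ord.ToType → Cardinal.{u} :=
    fun β => ⨆ γ : (Iic β : Set (lam.ord.cof).ord.ToType), l γ with hcdef
  have hIic : ∀ β : (lam.ord.cof).ord.ToType,
      #(Iic β : Set (lam.ord.cof).ord.ToType) < lam.ord.cof := by
    intro β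
    calc #(Iic β : Set (lam.ord.cof).ord.ToType)
        = #(insert β (Iio β) : Set (lam.ord.cof).ord.ToType) := by rw [Iio_insert]
      _ ≤ #(Iio β : Set (lam.ord.cof).ord.ToType) + 1 := Cardinal.mk_insert_le
      _ < lam.ord.cof := Cardinal.add_lt_of_lt hκinf (Cardinal.mk_Iio_ord_toType β)
          (one_lt_aleph0.trans_le hκinf)
  have hcl : ∀ β, l β ≤ c β := fun β =>
    le_ciSup (Cardinal.bddAbove_range _)
      (⟨β, mem_Iic.2 le_rfl⟩ : (Iic β : Set (lam.ord.cof).ord.ToType))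
  have hcmono : ∀ {β β' : (lam.ord.cof).ord.ToType}, β ≤ β' → c β ≤ c β' := by
    intro β β' h
    exact ciSup_le' fun γ =>
      le_ciSup (Cardinal.bddAbove_range _)
        (⟨γ.1, mem_Iic.2 (le_trans (mem_Iic.1 γ.2) h)⟩ :
          (Iic β' : Set (lam.ord.cof).ord.ToType))
  have hclt : ∀ β, c β < lam := fun β => Ordinal.iSup_lt (hIic β) fun γ => hl γ.1
  -- for each β, a point whose every neighborhood meets at least (c β) many Y i
  have hP : ∀ β : (lam.ord.cof).ord.ToType, ∃ x : X,
      ∀ U ∈ nhds x, c β ≤ #{i : lam.ord.ToType | (Y i ∩ U).Nonempty} := by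
    intro β
    obtain ⟨γ₀, hγ₀⟩ : ∃ γ, c β < l γ := exists_lt_of_lt_ciSup (lt_of_lt_of_eq (hclt β) hsup.symm)
    by_cases hr : l γ₀ ≤ #(range Y)
    · -- many distinct sets: use h2
      have hle : #((l γ₀).ord.ToType) ≤ #(range Y) := by
        rwa [Cardinal.mk_toType, Cardinal.card_ord]
      obtain ⟨e⟩ := Cardinal.le_def _ _ |>.1 hle
      set Z : (l γ₀).ord.ToType → Set X := fun j => (e j : Set X) with hZdef
      have hZF : ∀ j, Z j ∈ F := by
        intro j
        obtain ⟨i, hi⟩ := (e j).2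
        have := hY i
        rwa [hi] at this
      have hZinj : Function.Injective Z := fun a b h => e.injective (Subtype.ext h)
      obtain ⟨x, hx⟩ := h2 γ₀ Z hZF hZinj
      refine ⟨x, fun U hU => ?_⟩
      have hcard := hx U hU
      have hle2 : l γ₀ ≤ #{i : lam.ord.ToType | (Y i ∩ U).Nonempty} := by
        rw [← hcard]
        have hinj : Function.Injective
            (fun j : {j | (Z j ∩ U).Nonempty} =>
              (⟨(e j.1).2.choose, by
                rw [mem_setOf_eq, (e j.1).2.choose_spec]; exact j.2⟩ :
                {i : lam.ord.ToType | (Y i ∩ U).Nonempty})) := by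
          intro j₁ j₂ h
          have hh1 := (e j₁.1).2.choose_spec
          have hh2 := (e j₂.1).2.choose_spec
          have heq : (e j₁.1 : Set X) = (e j₂.1 : Set X) := by
            rw [← hh1, ← hh2, Subtype.mk_eq_mk.1 h]
          exact Subtype.ext (e.injective (Subtype.ext heq))
        exact Cardinal.mk_le_of_injective hinj
      exact le_trans hγ₀.le hle2
    · -- few distinct sets: some set repeats > c β many times
      push_neg at hr
      have hfib : ∃ A : range Y, c β < #{i : lam.ord.ToType | Y i = (A : Set X)} := by
        by_contra hcon
        push_neg at hcon
        have hself : ∀ A : range Y,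
            #{i // Set.rangeFactorization Y i = A}
              = #{i : lam.ord.ToType | Y i = (A : Set X)} := by
          intro A
          exact mk_congr (Equiv.subtypeEquivRight fun i => by
            simp [Set.rangeFactorization, Subtype.ext_iff])
        have hlt : lam < lam := by
          calc lam = #(lam.ord.ToType) := hmkL.symm
            _ = #(Σ A : range Y, {i // Set.rangeFactorization Y i = A}) :=
                (mk_congr (Equiv.sigmaFiberEquiv (Set.rangeFactorization Y))).symm
            _ = Cardinal.sum fun A : range Y => #{i // Set.rangeFactorization Y i = A} :=
                Cardinal.mk_sigma _
            _ ≤ Cardinal.sum fun _ : range Y => c β := by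
                refine Cardinal.sum_le_sum _ _ fun A => ?_
                rw [hself A]; exact hcon A
            _ = #(range Y) * c β := Cardinal.sum_const' _ _
            _ < lam := Cardinal.mul_lt_of_lt hinf (hr.trans (hl γ₀)) (hclt β)
        exact absurd hlt (lt_irrefl _)
      obtain ⟨A, hA⟩ := hfib
      obtain ⟨i₀, hi₀⟩ := A.2
      have hAF : (A : Set X) ∈ F := by have := hY i₀; rwa [hi₀] at this
      obtain ⟨p, hp⟩ := hF _ hAF
      refine ⟨p, fun U hU => ?_⟩
      have hpU := mem_of_mem_nhds hU
      refine le_trans hA.le (Cardinal.mk_le_mk_of_subset fun i hi => ?_)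
      exact ⟨p, by rw [show Y i = (A : Set X) from hi]; exact hp, hpU⟩
  choose x hx using hP
  -- common final step
  have key : ∀ p : X,
      (∀ U ∈ nhds p, lam.ord.cof ≤ #{β : (lam.ord.cof).ord.ToType | U ∈ nhds (x β)}) →
      IsCompleteAccPt lam Y p := by
    intro p hp U hU
    refine le_antisymm (hub U) ?_
    have hB := hp U hU
    have hunb : ∀ γ : (lam.ord.cof).ord.ToType, ∃ β, U ∈ nhds (x β) ∧ γ ≤ β := by
      intro γ
      by_contra hcon
      push_neg at hcon
      have hsub : {β : (lam.ord.cof).ord.ToType | U ∈ nhds (x β)} ⊆ Iio γ :=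
        fun β hβ => hcon β hβ
      exact absurd (hB.trans (Cardinal.mk_le_mk_of_subset hsub))
        (not_le.2 (Cardinal.mk_Iio_ord_toType γ))
    refine le_trans (le_of_eq hsup.symm) (ciSup_le' fun γ => ?_)
    obtain ⟨β, hβB, hγβ⟩ := hunb γ
    exact le_trans (hcl γ) (le_trans (hcmono hγβ) (hx β U hβB))
  by_cases hcard : #(range x) < lam.ord.cof
  · -- some point is chosen cofinally many times
    have hbig : ∃ p : range x,
        lam.ord.cof ≤ #{β : (lam.ord.cof).ord.ToType | x β = (p : X)} := by
      by_contra hcon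
      push_neg at hcon
      have hlt : lam.ord.cof < lam.ord.cof := by
        calc lam.ord.cof = #((lam.ord.cof).ord.ToType) := hmkK.symm
          _ = #(Σ p : range x, {β // Set.rangeFactorization x β = p}) :=
              (mk_congr (Equiv.sigmaFiberEquiv (Set.rangeFactorization x))).symm
          _ = Cardinal.sum fun p : range x => #{β // Set.rangeFactorization x β = p} :=
              Cardinal.mk_sigma _
          _ < lam.ord.cof := by
              refine Cardinal.sum_lt_of_isRegular hκreg hcard fun p => ?_
              have heq : #{β // Set.rangeFactorization x β = p}
                  = #{β : (lam.ord.cof).ord.ToType | x β = (p : X)} :=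
                mk_congr (Equiv.subtypeEquivRight fun β => by
                  simp [Set.rangeFactorization, Subtype.ext_iff])
              rw [heq]
              exact hcon p
      exact absurd hlt (lt_irrefl _)
    obtain ⟨p, hp⟩ := hbig
    refine ⟨p.1, key p.1 fun U hU => le_trans hp (Cardinal.mk_le_mk_of_subset ?_)⟩
    intro β hβ
    show U ∈ nhds (x β)
    rw [show x β = (p : X) from hβ]
    exact hU
  · -- the chosen points form a set of full cofinality size; use CapSet
    have hcard' : #(range x) = lam.ord.cof :=
      le_antisymm (Cardinal.mk_range_le.trans_eq hmkK) (not_lt.1 hcard)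
    obtain ⟨p, hp⟩ := h1 (range x) hcard'
    refine ⟨p, key p fun U hU => ?_⟩
    obtain ⟨V, hVU, hVopen, hpV⟩ := mem_nhds_iff.1 hU
    have h1' : #(↥(range x ∩ V)) = lam.ord.cof := (hp V (hVopen.mem_nhds hpV)).trans hcard'
    have hsurj : lam.ord.cof ≤ #{β : (lam.ord.cof).ord.ToType | x β ∈ V} := by
      refine h1'.symm.trans_le (Cardinal.mk_le_of_surjective
        (f := fun β : {β : (lam.ord.cof).ord.ToType | x β ∈ V} =>
          (⟨x β.1, mem_range_self _, β.2⟩ : ↥(range x ∩ V))) ?_)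
      rintro ⟨q, ⟨β, rfl⟩, hqV⟩
      exact ⟨⟨β, hqV⟩, rfl⟩
    refine hsurj.trans (Cardinal.mk_le_mk_of_subset fun β hβ => ?_)
    exact Filter.mem_of_superset (hVopen.mem_nhds hβ) hVU
end

section
/- Let λ be an infinite cardinal, X a topological space, and (Y_α)_{α<λ} a λ-indexed sequence of subsets of X. A point x ∈ X is a λ-complete accumulation point of (Y_α)_{α<λ} if and only if there exists an ultrafilter D uniform over λ such that x is a D-limit point of (Y_α)_{α<λ}. -/
open Cardinal Set Topology

universe u

/-- `x` is a `D`-limit point of the family `Y`. -/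
def IsDLimit {X : Type u} [TopologicalSpace X] {Z : Type v} (D : Ultrafilter Z)
    (Y : Z → Set X) (x : X) : Prop :=
  ∀ U ∈ nhds x, {z : Z | (Y z ∩ U).Nonempty} ∈ D

/-- The filter of sets whose complement has cardinality `< lam`. -/
def cosmall (lam : Cardinal.{u}) (hlam : Cardinal.aleph0 ≤ lam) (ι : Type u) : Filter ι where
  sets := {s | #(↥sᶜ) < lam}
  univ_sets := by
    simp only [Set.mem_setOf_eq, Set.compl_univ, Cardinal.mk_eq_zero]
    exact lt_of_lt_of_le Cardinal.aleph0_pos hlam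
  sets_of_superset := by
    intro s t hs hst
    exact lt_of_le_of_lt (Cardinal.mk_le_mk_of_subset (Set.compl_subset_compl.2 hst)) hs
  inter_sets := by
    intro s t hs ht
    simp only [Set.mem_setOf_eq, Set.compl_inter]
    calc #(↥(sᶜ ∪ tᶜ)) ≤ #(↥sᶜ) + #(↥tᶜ) := Cardinal.mk_union_le _ _
      _ < lam := Cardinal.add_lt_of_lt hlam hs ht

theorem stmt3 {X : Type u} [TopologicalSpace X] (lam : Cardinal.{u})
    (hlam : Cardinal.aleph0 ≤ lam) (Y : lam.ord.ToType → Set X) (x : X) :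
    IsCompleteAccPt lam Y x ↔
      ∃ D : Ultrafilter lam.ord.ToType, (∀ A ∈ D, #A = lam) ∧ IsDLimit D Y x := by
  constructor
  · intro h
    have hmono : Monotone (fun U : Set X => {i : lam.ord.ToType | (Y i ∩ U).Nonempty}) := by
      intro U V hUV i hi
      exact hi.mono (Set.inter_subset_inter_right _ hUV)
    set f : Filter lam.ord.ToType := (nhds x).lift' (fun U => {i : lam.ord.ToType | (Y i ∩ U).Nonempty}) with hf
    have hmemf : ∀ U ∈ nhds x, {i : lam.ord.ToType | (Y i ∩ U).Nonempty} ∈ f := by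
      intro U hU
      exact Filter.mem_lift' hU
    set C := cosmall lam hlam lam.ord.ToType with hC
    have hbot : (f ⊓ C).NeBot := by
      rw [Filter.inf_neBot_iff]
      intro s hs t ht
      obtain ⟨U, hU, hUs⟩ := (Filter.mem_lift'_sets hmono).1 hs
      have hcard : #{i : lam.ord.ToType | (Y i ∩ U).Nonempty} = lam := h U hU
      by_contra hemp
      rw [Set.not_nonempty_iff_eq_empty] at hemp
      have hsub : {i : lam.ord.ToType | (Y i ∩ U).Nonempty} ⊆ tᶜ := by
        intro i hi
        intro hit
        exact Set.eq_empty_iff_forall_notMem.1 hemp i ⟨hUs hi, hit⟩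
      have := Cardinal.mk_le_mk_of_subset hsub
      rw [hcard] at this
      exact absurd (lt_of_le_of_lt this ht) (lt_irrefl lam)
    refine ⟨Ultrafilter.of (f ⊓ C), ?_, ?_⟩
    · intro A hA
      have hle : #A ≤ lam := by
        calc #A ≤ #lam.ord.ToType := Cardinal.mk_set_le A
          _ = lam := Cardinal.mk_ord_toType lam
      rcases lt_or_eq_of_le hle with hlt | heq
      · exfalso
        have hAc : Aᶜ ∈ C := by
          simp only [hC]
          show #(↥Aᶜᶜ) < lam
          rwa [compl_compl]
        have : Aᶜ ∈ Ultrafilter.of (f ⊓ C) :=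
          Ultrafilter.of_le (f ⊓ C) (Filter.mem_inf_of_right hAc)
        exact Ultrafilter.compl_notMem_iff.2 hA this
      · exact heq
    · intro U hU
      exact Ultrafilter.of_le (f ⊓ C) (Filter.mem_inf_of_left (hmemf U hU))
  · rintro ⟨D, hD, hDlim⟩
    intro U hU
    exact hD _ (hDlim U hU)
end

section
/- Let X be a topological space, 𝓕 a family of subsets of X, and λ a regular infinite cardinal. Then X is 𝓕-[λ,λ]-compact if and only if the following holds: for every λ-indexed family (C_α)_{α<λ} of closed subsets of X with C_α ⊇ C_β whenever α ≤ β < λ, if for every α < λ there exists F ∈ 𝓕 with F ⊆ C_α, then ⋂_{α<λ} C_α is nonempty. -/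
open Cardinal Set Topology

universe u

/-- `X` is `𝓕`-[μ,λ]-compact. -/
def FMuLamCompact {X : Type u} [TopologicalSpace X] (F : Set (Set X))
    (mu lam : Cardinal.{u}) : Prop :=
  ∀ C : lam.ord.ToType → Set X, (∀ α, IsClosed (C α)) →
    (∀ Z : Set lam.ord.ToType, #Z < mu → ∃ f ∈ F, f ⊆ ⋂ α ∈ Z, C α) →
    (⋂ α, C α).Nonempty

theorem stmt4 {X : Type u} [TopologicalSpace X] (F : Set (Set X)) (lam : Cardinal.{u})
    (hlam : lam.IsRegular) :
    FMuLamCompact F lam lam ↔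
      ∀ C : lam.ord.ToType → Set X, (∀ α, IsClosed (C α)) →
        (∀ α β, α ≤ β → C β ⊆ C α) →
        (∀ α, ∃ f ∈ F, f ⊆ C α) →
        (⋂ α, C α).Nonempty := by
  constructor
  · intro h C hcl hmono hF
    refine h C hcl fun Z hZ => ?_
    -- Z is bounded since lam is regular
    haveI : IsWellOrder lam.ord.ToType (· < ·) := ⟨⟩
    have hbdd : Set.Bounded (· < ·) Z := by
      exact not_isCofinal_iff.1 fun hc => (Order.cof_le hc).not_gt
        (by rwa [Ordinal.cof_toType, hlam.cof_eq])
    obtain ⟨b, hb⟩ := hbdd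
    obtain ⟨f, hf, hfb⟩ := hF b
    refine ⟨f, hf, hfb.trans ?_⟩
    intro x hx
    simp only [mem_iInter]
    intro α hα
    exact hmono α b (le_of_lt (hb α hα)) hx
  · intro h C hcl hsmall
    set D : lam.ord.ToType → Set X := fun α => ⋂ β ∈ Iic α, C β with hD
    have hDcl : ∀ α, IsClosed (D α) := fun α => isClosed_biInter fun β _ => hcl β
    have hDmono : ∀ α β, α ≤ β → D β ⊆ D α := fun α β hab =>
      biInter_subset_biInter_left (Iic_subset_Iic.mpr hab)
    have hDF : ∀ α, ∃ f ∈ F, f ⊆ D α := by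
      intro α
      apply hsmall
      calc #(Iic α) ≤ #(Iio α) + 1 := by
            rw [← Iio_union_right]
            exact (mk_union_le _ _).trans (by simp)
        _ < lam := Cardinal.add_lt_of_lt hlam.aleph0_le (mk_Iio_ord_toType α)
            (lt_of_lt_of_le one_lt_aleph0 hlam.aleph0_le)
    obtain ⟨x, hx⟩ := h D hDcl hDmono hDF
    refine ⟨x, mem_iInter.mpr fun α => ?_⟩
    have := mem_iInter.mp hx α
    exact mem_iInter₂.mp this α (mem_Iic.mpr le_rfl)
end

section
/- Let X be a topological space, 𝓕 a family of subsets of X, and λ a regular infinite cardinal. Then X is 𝓕-[λ,λ]-compact if and only if X satisfies 𝓕-CAP*_λ. -/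
open Cardinal Set Topology

universe u

instance auxWO (o : Ordinal.{u}) : IsWellOrder o.ToType (· < ·) := isWellOrder_lt

theorem auxBounded (lam : Cardinal.{u}) (hlam : lam.IsRegular) (Z : Set lam.ord.ToType)
    (h : #Z < lam) : Set.Bounded (· < ·) Z := by
  by_contra hb
  rw [Set.not_bounded_iff] at hb
  have := Order.cof_le (s := Z) (fun a => by
    obtain ⟨b, hb1, hb2⟩ := hb a
    exact ⟨b, hb1, not_lt.1 hb2⟩)
  rw [Ordinal.cof_toType, hlam.cof_ord] at this
  exact absurd h (not_lt.2 this)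

theorem auxUnbounded (lam : Cardinal.{u}) (hlam : lam.IsRegular) (S : Set lam.ord.ToType)
    (h : Set.Unbounded (· < ·) S) : lam ≤ #S := by
  have := Order.cof_le (s := S) (fun a => by
    obtain ⟨b, hb1, hb2⟩ := h a
    exact ⟨b, hb1, not_lt.1 hb2⟩)
  rwa [Ordinal.cof_toType, hlam.cof_ord] at this

theorem stmt5 {X : Type u} [TopologicalSpace X] (F : Set (Set X)) (lam : Cardinal.{u})
    (hlam : lam.IsRegular) :
    FMuLamCompact F lam lam ↔ CapStar F lam := by
  have hmk : #(lam.ord.ToType) = lam := by rw [Cardinal.mk_toType, Cardinal.card_ord]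
  constructor
  · intro hc Y hY
    set C : lam.ord.ToType → Set X := fun α => closure (⋃ β ∈ Set.Ici α, Y β) with hCdef
    have hfam : ∀ Z : Set lam.ord.ToType, #Z < lam → ∃ f ∈ F, f ⊆ ⋂ α ∈ Z, C α := by
      intro Z hZ
      obtain ⟨β, hβ⟩ := auxBounded lam hlam Z hZ
      refine ⟨Y β, hY β, ?_⟩
      intro y hy
      simp only [Set.mem_iInter₂]
      intro α hα
      exact subset_closure (Set.mem_biUnion (le_of_lt (hβ α hα)) hy)
    obtain ⟨x, hx⟩ := hc C (fun α => isClosed_closure) hfam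
    refine ⟨x, fun U hU => ?_⟩
    have hle : #{i : lam.ord.ToType | (Y i ∩ U).Nonempty} ≤ lam := le_trans (Cardinal.mk_set_le _) hmk.le
    refine le_antisymm hle ?_
    have hunb : Set.Unbounded (· < ·) {i : lam.ord.ToType | (Y i ∩ U).Nonempty} := by
      intro α
      have hxC : x ∈ C α := by
        have := Set.mem_iInter.1 hx α
        exact this
      rw [hCdef, mem_closure_iff_nhds] at hxC
      obtain ⟨y, hyU, hyY⟩ := hxC U hU
      simp only [Set.mem_iUnion] at hyY
      obtain ⟨β, hβ, hyβ⟩ := hyY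
      exact ⟨β, ⟨y, hyβ, hyU⟩, not_lt.2 hβ⟩
    exact auxUnbounded lam hlam _ hunb
  · intro h C hC hF
    have hsel : ∀ α : lam.ord.ToType, ∃ f ∈ F, f ⊆ ⋂ β ∈ Set.Iic α, C β := by
      intro α
      refine hF (Set.Iic α) ?_
      have h1 : #(Set.Iic α) ≤ #(Set.Iio α) + 1 := by
        have : Set.Iic α = insert α (Set.Iio α) := by
          ext x; simp [le_iff_lt_or_eq, or_comm]
        rw [this]
        exact (Cardinal.mk_insert_le).trans (le_refl _)
      have h2 : #(Set.Iio α) < lam := Cardinal.mk_Iio_ord_toType α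
      calc #(Set.Iic α) ≤ #(Set.Iio α) + 1 := h1
        _ < lam := Cardinal.add_lt_of_lt hlam.aleph0_le h2 (lt_of_lt_of_le one_lt_aleph0 hlam.aleph0_le)
    choose f hfF hfsub using hsel
    obtain ⟨x, hx⟩ := h f hfF
    refine ⟨x, ?_⟩
    rw [Set.mem_iInter]
    intro β
    by_contra hxβ
    have hU : (C β)ᶜ ∈ nhds x := (hC β).isOpen_compl.mem_nhds hxβ
    have hcard := hx _ hU
    have hsub : {i : lam.ord.ToType | (f i ∩ (C β)ᶜ).Nonempty} ⊆ Set.Iio β := by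
      intro α hα
      by_contra hlt
      rw [Set.mem_Iio, not_lt] at hlt
      obtain ⟨y, hy1, hy2⟩ := hα
      have : y ∈ ⋂ γ ∈ Set.Iic α, C γ := hfsub α hy1
      exact hy2 (Set.mem_iInter₂.1 this β hlt)
    have : #{i : lam.ord.ToType | (f i ∩ (C β)ᶜ).Nonempty} < lam :=
      lt_of_le_of_lt (Cardinal.mk_le_mk_of_subset hsub) (Cardinal.mk_Iio_ord_toType β)
    exact absurd hcard (ne_of_lt this)
end

section
/- Let X be a topological space, 𝓕 a family of subsets of X, and λ a regular infinite cardinal. Suppose that for every λ-indexed family (C_α)_{α<λ} of closed subsets of X such that C_α ⊇ C_β whenever α ≤ β < λ, such that each C_α is the closure of the union of some set of at most λ members of 𝓕, and such that for every α < λ there exists F ∈ 𝓕 with F ⊆ C_α, the intersection ⋂_{α<λ} C_α is nonempty. Then X satisfies 𝓕-CAP*_λ. -/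
open Cardinal Set Topology

universe u

theorem stmt6 {X : Type u} [TopologicalSpace X] (F : Set (Set X)) (lam : Cardinal.{u})
    (hlam : lam.IsRegular)
    (h : ∀ C : lam.ord.ToType → Set X, (∀ α, IsClosed (C α)) →
      (∀ α β, α ≤ β → C β ⊆ C α) →
      (∀ α, ∃ s : Set (Set X), s ⊆ F ∧ #s ≤ lam ∧ C α = closure (⋃₀ s)) →
      (∀ α, ∃ f ∈ F, f ⊆ C α) →
      (⋂ α, C α).Nonempty) :
    CapStar F lam := by
  intro Y hY
  set C : lam.ord.ToType → Set X := fun α => closure (⋃₀ (Y '' Ici α)) with hC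
  obtain ⟨x, hx⟩ := h C (fun α => isClosed_closure)
    (fun α β hab => closure_mono (sUnion_subset_sUnion (image_mono (Ici_subset_Ici.2 hab))))
    (fun α => ⟨Y '' Ici α, by rintro s ⟨β, -, rfl⟩; exact hY β,
      mk_image_le.trans (by simpa using (mk_set_le (Ici α)).trans_eq (mk_ord_toType lam)), rfl⟩)
    (fun α => ⟨Y α, hY α,
      (subset_sUnion_of_mem (mem_image_of_mem Y self_mem_Ici)).trans subset_closure⟩)
  refine ⟨x, ?_⟩
  intro U hU
  set S : Set lam.ord.ToType := {i | (Y i ∩ U).Nonempty} with hS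
  have hle : #S ≤ lam := (mk_set_le S).trans_eq (mk_ord_toType lam)
  refine le_antisymm hle (le_of_not_gt fun hlt => ?_)
  haveI : IsWellOrder lam.ord.ToType (· < ·) := ⟨⟩
  obtain ⟨a, ha⟩ : Bounded (· < ·) S := by
    by_contra hnb
    have hcof : IsCofinal S := fun a => by
      by_contra hna
      push_neg at hna
      exact hnb ⟨a, fun b hb => hna b hb⟩
    have hc := Order.cof_le hcof
    rw [Ordinal.cof_toType, hlam.cof_ord] at hc
    exact absurd hlt (not_lt.2 hc)
  obtain ⟨V, hVU, hVo, hxV⟩ := mem_nhds_iff.1 hU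
  have hxC : x ∈ C a := mem_iInter.1 hx a
  obtain ⟨z, hzV, hz⟩ := mem_closure_iff.1 hxC V hVo hxV
  obtain ⟨s, ⟨β, hβ, rfl⟩, hzs⟩ := hz
  exact absurd (ha β ⟨z, hzs, hVU hzV⟩) (not_lt.2 hβ)
end

section
/- Let X be a topological space, 𝓕 a family of subsets of X, and λ a regular infinite cardinal. If X is 𝓕-D-compact for some ultrafilter D uniform over λ, then X is 𝓕-[λ,λ]-compact. -/
open Cardinal Set Topology

universe u v w

/-- `X` is `𝓕`-`D`-compact: every `Z`-indexed family of members of `𝓕` has a `D`-limit point. -/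
def FDCompact {X : Type u} [TopologicalSpace X] {Z : Type v} (F : Set (Set X))
    (D : Ultrafilter Z) : Prop :=
  ∀ Y : Z → Set X, (∀ z, Y z ∈ F) → ∃ x : X, IsDLimit D Y x

theorem stmt8 {X : Type u} [TopologicalSpace X] (F : Set (Set X)) (lam : Cardinal.{u})
    (hlam : lam.IsRegular) (D : Ultrafilter lam.ord.ToType)
    (hD : ∀ A ∈ D, #A = lam) (h : FDCompact F D) :
    FMuLamCompact F lam lam := by
  intro C hC hfin
  choose Y hYF hYsub using fun z : lam.ord.ToType =>
    hfin (Set.Iio z) (Cardinal.mk_Iio_ord_toType z)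
  obtain ⟨x, hx⟩ := h Y hYF
  refine ⟨x, Set.mem_iInter.2 fun α => ?_⟩
  by_contra hxα
  have hU : (C α)ᶜ ∈ nhds x := (hC α).isOpen_compl.mem_nhds hxα
  have hS : {z | (Y z ∩ (C α)ᶜ).Nonempty} ∈ D := hx _ hU
  have hcard : #{z | (Y z ∩ (C α)ᶜ).Nonempty} = lam := hD _ hS
  have hIic : #(Set.Iic α) < lam := by
    have : (Set.Iic α) = insert α (Set.Iio α) := by
      ext y; simp [le_iff_lt_or_eq, or_comm]
    rw [this]
    calc #(insert α (Set.Iio α) : Set _) ≤ #(Set.Iio α) + 1 := Cardinal.mk_insert_le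
      _ < lam := by
        apply Cardinal.add_lt_of_lt hlam.aleph0_le (Cardinal.mk_Iio_ord_toType α)
        exact lt_of_lt_of_le Cardinal.one_lt_aleph0 hlam.aleph0_le
  have hsub : ¬ {z | (Y z ∩ (C α)ᶜ).Nonempty} ⊆ Set.Iic α := by
    intro hss
    have hle := Cardinal.mk_le_mk_of_subset hss
    rw [hcard] at hle
    exact absurd hle (not_le_of_gt hIic)
  obtain ⟨z, hz1, hz2⟩ := Set.not_subset.1 hsub
  have hαz : α < z := not_le.1 hz2
  obtain ⟨y, hy1, hy2⟩ := hz1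
  exact hy2 (Set.mem_iInter₂.1 (hYsub z hy1) α hαz)
end

section
/- Let X be a topological space, 𝓕 a family of subsets of X, and λ an infinite cardinal. For every cardinal δ let X^δ denote the δ-th power of X with the product (Tychonoff) topology, and let 𝓕^δ be the family of all subsets of X^δ of the form ∏_{β<δ} F_β with each F_β ∈ 𝓕. Then there exists an ultrafilter D uniform over λ such that X is 𝓕-D-compact if and only if there exists an ultrafilter D uniform over λ such that, for every cardinal δ, the space X^δ is 𝓕^δ-D-compact. -/
open Cardinal Set Topology

universe u v w

/-- The family of all products of `δ` members of `𝓕`, as subsets of the power `X^δ`. -/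
def PowFamily {X : Type u} (F : Set (Set X)) (δ : Cardinal.{u}) :
    Set (Set (δ.ord.ToType → X)) :=
  {s | ∃ f : δ.ord.ToType → Set X, (∀ β, f β ∈ F) ∧ s = Set.pi Set.univ f}

theorem stmt11 {X : Type u} [TopologicalSpace X] (F : Set (Set X)) (lam : Cardinal.{u})
    (hlam : Cardinal.aleph0 ≤ lam) :
    (∃ D : Ultrafilter lam.ord.ToType, (∀ A ∈ D, #A = lam) ∧ FDCompact F D) ↔
      ∃ D : Ultrafilter lam.ord.ToType, (∀ A ∈ D, #A = lam) ∧
        ∀ δ : Cardinal.{u}, FDCompact (PowFamily F δ) D := by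
  constructor
  · rintro ⟨D, hD, hF⟩
    refine ⟨D, hD, fun δ Y hY => ?_⟩
    choose f hf hYeq using hY
    -- every member of F is nonempty
    have hFne : ∀ S ∈ F, S.Nonempty := by
      intro S hS
      obtain ⟨x, hx⟩ := hF (fun _ => S) (fun _ => hS)
      obtain ⟨z, hz⟩ := (D : Filter lam.ord.ToType).nonempty_of_mem (hx univ Filter.univ_mem)
      exact hz.mono (inter_subset_left)
    have hp : ∀ z β, (f z β).Nonempty := fun z β => hFne _ (hf z β)
    choose p hpmem using hp
    choose x hx using fun β => hF (fun z => f z β) (fun z => hf z β)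
    refine ⟨x, fun U hU => ?_⟩
    rw [nhds_pi, Filter.mem_pi] at hU
    obtain ⟨I, hIfin, t, ht, hts⟩ := hU
    have hmem : {z : lam.ord.ToType | ∀ β ∈ I, (f z β ∩ t β).Nonempty} ∈ D := by
      have : (⋂ β ∈ I, {z : lam.ord.ToType | (f z β ∩ t β).Nonempty}) ∈ D :=
        (Filter.biInter_mem hIfin).2 fun β _ => hx β (t β) (ht β)
      filter_upwards [this] with z hz β hβ using by
        simpa using mem_iInter₂.1 hz β hβ
    filter_upwards [hmem] with z hz
    classical
    refine ⟨fun β => if h : β ∈ I then (hz β h).choose else p z β, ?_, ?_⟩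
    · rw [hYeq z]
      intro β _
      by_cases h : β ∈ I
      · simp only [h, dif_pos]
        exact (hz β h).choose_spec.1
      · simp only [h, dif_neg, not_false_iff]
        exact hpmem z β
    · apply hts
      intro β hβ
      simp only [hβ, dif_pos]
      exact (hz β hβ).choose_spec.2
  · rintro ⟨D, hD, hF⟩
    refine ⟨D, hD, fun Y hY => ?_⟩
    have hne : Nonempty (Cardinal.ord 1).ToType :=
      Ordinal.toType_nonempty_iff_ne_zero.2 (by simp)
    obtain ⟨i₀⟩ := hne
    obtain ⟨x, hx⟩ := hF 1 (fun z => Set.pi univ (fun _ => Y z))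
      (fun z => ⟨fun _ => Y z, fun _ => hY z, rfl⟩)
    refine ⟨x i₀, fun U hU => ?_⟩
    have : (fun g : (Cardinal.ord 1).ToType → X => g i₀) ⁻¹' U ∈ nhds x :=
      (continuous_apply i₀).continuousAt hU
    filter_upwards [hx _ this] with z hz
    obtain ⟨g, hg1, hg2⟩ := hz
    exact ⟨g i₀, hg1 i₀ (mem_univ _), hg2⟩
end

section
/- Let X be a topological space, 𝓕 a family of subsets of X, and λ an infinite cardinal. For every cardinal δ let X^δ denote the δ-th power of X with the product (Tychonoff) topology, and let 𝓕^δ be the family of all subsets of X^δ of the form ∏_{β<δ} F_β with each F_β ∈ 𝓕. Then there exists an ultrafilter D uniform over λ such that X is 𝓕-D-compact if and only if, for every cardinal δ, the space X^δ satisfies 𝓕^δ-CAP*_λ. -/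
open Cardinal Set Topology

universe u

/-- The filter of sets whose complement has cardinality `< lam`. -/
def cosmallFilter (lam : Cardinal.{u}) (hlam : Cardinal.aleph0 ≤ lam) (ι : Type u) :
    Filter ι where
  sets := {A | #↥(Aᶜ) < lam}
  univ_sets := by
    simp only [Set.mem_setOf_eq, Set.compl_univ, Cardinal.mk_emptyCollection]
    exact lt_of_lt_of_le Cardinal.aleph0_pos hlam
  sets_of_superset := by
    intro A B hA hAB
    exact lt_of_le_of_lt (Cardinal.mk_le_mk_of_subset (Set.compl_subset_compl.2 hAB)) hA
  inter_sets := by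
    intro A B hA hB
    simp only [Set.mem_setOf_eq, Set.compl_inter]
    exact lt_of_le_of_lt (Cardinal.mk_union_le _ _) (Cardinal.add_lt_of_lt hlam hA hB)

lemma mem_cosmallFilter {lam : Cardinal.{u}} {hlam : Cardinal.aleph0 ≤ lam} {ι : Type u}
    {A : Set ι} : A ∈ cosmallFilter lam hlam ι ↔ #↥(Aᶜ) < lam := Iff.rfl

theorem stmt12 {X : Type u} [TopologicalSpace X] (F : Set (Set X)) (lam : Cardinal.{u})
    (hlam : Cardinal.aleph0 ≤ lam) :
    (∃ D : Ultrafilter lam.ord.ToType, (∀ A ∈ D, #A = lam) ∧ FDCompact F D) ↔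
      ∀ δ : Cardinal.{u}, CapStar (PowFamily F δ) lam := by
  have hcard : #(lam.ord.ToType) = lam := Cardinal.mk_ord_toType lam
  constructor
  · rintro ⟨D, hDu, hDc⟩ δ Y hY
    -- every member of F is nonempty
    have hne : ∀ s ∈ F, s.Nonempty := by
      intro s hs
      obtain ⟨x0, hx0⟩ := hDc (fun _ => s) (fun _ => hs)
      obtain ⟨z, hz⟩ := Filter.nonempty_of_mem (f := (D : Filter lam.ord.ToType))
        (hx0 Set.univ Filter.univ_mem)
      obtain ⟨y, hy, -⟩ := hz
      exact ⟨y, hy⟩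
    choose f hf hYf using hY
    have hxl : ∀ β, ∃ x, IsDLimit D (fun α => f α β) x := fun β => hDc _ (fun α => hf α β)
    choose x hxl using hxl
    refine ⟨x, ?_⟩
    intro V hV
    have hge : lam ≤ #{α | (Y α ∩ V).Nonempty} := by
      rw [nhds_pi] at hV
      obtain ⟨I, hIfin, t, ht, hts⟩ := Filter.mem_pi.1 hV
      have hAD : (⋂ β ∈ I, {α | ((f α β) ∩ t β).Nonempty}) ∈ D :=
        (Filter.biInter_mem hIfin).2 fun β _ => hxl β (t β) (ht β)
      have hsub : (⋂ β ∈ I, {α | ((f α β) ∩ t β).Nonempty}) ⊆ {α | (Y α ∩ V).Nonempty} := by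
        intro α hα
        simp only [Set.mem_iInter, Set.mem_setOf_eq] at hα
        have hpt : ∀ β, ∃ y, y ∈ f α β ∧ (β ∈ I → y ∈ t β) := by
          intro β
          by_cases hβ : β ∈ I
          · obtain ⟨y, hy1, hy2⟩ := hα β hβ
            exact ⟨y, hy1, fun _ => hy2⟩
          · obtain ⟨y, hy⟩ := hne _ (hf α β)
            exact ⟨y, hy, fun h => absurd h hβ⟩
        choose y hy1 hy2 using hpt
        refine ⟨y, ?_, hts fun β hβ => hy2 β hβ⟩
        rw [hYf α, Set.mem_univ_pi]
        exact hy1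
      calc lam = #(⋂ β ∈ I, {α | ((f α β) ∩ t β).Nonempty}) := (hDu _ hAD).symm
        _ ≤ _ := Cardinal.mk_le_mk_of_subset hsub
    exact le_antisymm (le_of_le_of_eq (Cardinal.mk_set_le _) hcard) hge
  · intro h
    obtain ⟨e⟩ := Cardinal.eq.1 (Cardinal.mk_ord_toType #(lam.ord.ToType → ↥F))
    set δ := #(lam.ord.ToType → ↥F) with hδ
    set Yp : lam.ord.ToType → Set (δ.ord.ToType → X) :=
      fun α => Set.pi Set.univ (fun β => ((e β) α : Set X)) with hYp
    obtain ⟨x, hx⟩ := h δ Yp (fun α => ⟨fun β => ((e β) α : Set X), fun β => (e β α).2, rfl⟩)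
    set base : Set (δ.ord.ToType → X) → Set lam.ord.ToType :=
      fun V => {α | (Yp α ∩ V).Nonempty} with hbase
    have hmono : Monotone base := by
      rintro V W hVW α ⟨y, hy1, hy2⟩
      exact ⟨y, hy1, hVW hy2⟩
    set L : Filter lam.ord.ToType := (nhds x).lift' base with hL
    have hmemL : ∀ A, A ∈ L ↔ ∃ V ∈ nhds x, base V ⊆ A := fun A => Filter.mem_lift'_sets hmono
    have hLcard : ∀ A ∈ L, lam ≤ #A := by
      intro A hA
      obtain ⟨V, hV, hVA⟩ := (hmemL A).1 hA
      calc lam = #(base V) := (hx V hV).symm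
        _ ≤ #A := Cardinal.mk_le_mk_of_subset hVA
    have hne : Filter.NeBot (L ⊓ cosmallFilter lam hlam lam.ord.ToType) := by
      rw [Filter.inf_neBot_iff]
      intro s hs s' hs'
      by_contra hc
      rw [Set.not_nonempty_iff_eq_empty] at hc
      have hss : s ⊆ s'ᶜ := fun a ha ha' => Set.eq_empty_iff_forall_notMem.1 hc a ⟨ha, ha'⟩
      have : lam ≤ #↥(s'ᶜ) := le_trans (hLcard s hs) (Cardinal.mk_le_mk_of_subset hss)
      exact absurd (mem_cosmallFilter.1 hs') (not_lt.2 this)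
    haveI := hne
    set D := Ultrafilter.of (L ⊓ cosmallFilter lam hlam lam.ord.ToType) with hD
    have hDle : (D : Filter lam.ord.ToType) ≤ L ⊓ cosmallFilter lam hlam lam.ord.ToType :=
      Ultrafilter.of_le _
    have hDL : ∀ A ∈ L, A ∈ D := fun A hA => (hDle.trans inf_le_left) hA
    have hDC : (D : Filter lam.ord.ToType) ≤ cosmallFilter lam hlam lam.ord.ToType :=
      hDle.trans inf_le_right
    refine ⟨D, ?_, ?_⟩
    · intro A hA
      refine le_antisymm (le_of_le_of_eq (Cardinal.mk_set_le _) hcard) (not_lt.1 fun hlt => ?_)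
      have hAc : Aᶜ ∈ cosmallFilter lam hlam lam.ord.ToType :=
        mem_cosmallFilter.2 (by rwa [compl_compl])
      have h0 : (∅ : Set lam.ord.ToType) ∈ (D : Filter lam.ord.ToType) := by
        have := Filter.inter_mem hA (hDC hAc)
        rwa [Set.inter_compl_self] at this
      exact absurd h0 (Filter.empty_notMem _)
    · intro Y hY
      refine ⟨x (e.symm (fun z => ⟨Y z, hY z⟩)), ?_⟩
      intro U hU
      apply hDL
      refine (hmemL _).2 ⟨(fun y => y (e.symm (fun z => ⟨Y z, hY z⟩))) ⁻¹' U, ?_, ?_⟩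
      · exact (continuous_apply _).continuousAt.preimage_mem_nhds hU
      · rintro α ⟨y, hy1, hy2⟩
        refine ⟨y (e.symm (fun z => ⟨Y z, hY z⟩)), ?_, hy2⟩
        have := hy1 (e.symm (fun z => ⟨Y z, hY z⟩)) (Set.mem_univ _)
        simpa only [Equiv.apply_symm_apply] using this
end

section
/- Let X be a topological space, λ an infinite cardinal, κ the weight of X (the least cardinality of a base for the topology of X), and δ = min{2^{2^λ}, κ^λ} (cardinal exponentiation). Let X^δ denote the δ-th power of X with the product (Tychonoff) topology, and let 𝓕^δ be the family of all subsets of X^δ of the form ∏_{β<δ} O_β with each O_β a nonempty open subset of X. Then there exists an ultrafilter D uniform over λ such that X is D-pseudocompact if and only if every λ-indexed sequence of members of 𝓕^δ has a λ-complete accumulation point in X^δ. -/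
open Cardinal Set Topology

universe u

/-- `X` is `D`-pseudocompact: every family of nonempty open subsets of `X`
indexed by the underlying set of `D` has a `D`-limit point in `X`. -/
def DPseudocompact {X : Type u} [TopologicalSpace X] {Z : Type v} (D : Ultrafilter Z) : Prop :=
  FDCompact {s : Set X | s.Nonempty ∧ IsOpen s} D

/-- Intersecting a set of full cardinality with a co-small set keeps full cardinality. -/
lemma big_inter_cosmall {Z : Type u} {lam : Cardinal.{u}} (hlam : ℵ₀ ≤ lam)
    {P Q : Set Z} (hP : lam ≤ #P) (hQ : #(↑Qᶜ : Type u) < lam) :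
    lam ≤ #(↑(P ∩ Q) : Type u) := by
  by_contra h
  push_neg at h
  have hsub : P ⊆ (P ∩ Q) ∪ Qᶜ := by
    intro z hz
    by_cases hq : z ∈ Q
    · exact Or.inl ⟨hz, hq⟩
    · exact Or.inr hq
  have := (Cardinal.mk_le_mk_of_subset hsub).trans (Cardinal.mk_union_le _ _)
  exact absurd (hP.trans this) (not_le.mpr (Cardinal.add_lt_of_lt hlam h hQ))

/-- A finite intersection of co-small sets is co-small. -/
lemma cosmall_sInter {Z : Type u} {lam : Cardinal.{u}} (hlam : ℵ₀ ≤ lam)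
    {t : Set (Set Z)} (ht : t.Finite) (h : ∀ A ∈ t, #(↑Aᶜ : Type u) < lam) :
    #(↑(⋂₀ t)ᶜ : Type u) < lam := by
  revert h
  refine Set.Finite.induction_on (motive := fun (t : Set (Set Z)) _ => (∀ A ∈ t, #(↑Aᶜ : Type u) < lam) → #(↑(⋂₀ t)ᶜ : Type u) < lam) t ht ?_ ?_
  · intro _
    simpa using lt_of_lt_of_le aleph0_pos hlam
  · intro A s _ _ ih h
    rw [Set.sInter_insert, Set.compl_inter]
    refine lt_of_le_of_lt (Cardinal.mk_union_le _ _) (Cardinal.add_lt_of_lt hlam ?_ ?_)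
    · exact h A (Set.mem_insert _ _)
    · exact ih fun B hB => h B (Set.mem_insert_of_mem _ hB)

/-- A family with all finite intersections of full cardinality extends to a uniform
ultrafilter. -/
lemma exists_uniform {Z : Type u} {lam : Cardinal.{u}} (hlam : ℵ₀ ≤ lam) (hZ : #Z = lam)
    (S : Set (Set Z))
    (hS : ∀ t : Set (Set Z), t.Finite → t ⊆ S → lam ≤ #(↑(⋂₀ t) : Type u)) :
    ∃ D : Ultrafilter Z, (∀ A ∈ D, #A = lam) ∧ ∀ A ∈ S, A ∈ D := by
  classical
  set C : Set (Set Z) := {A | #(↑Aᶜ : Type u) < lam} with hC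
  have key : ∀ t : Set (Set Z), t.Finite → t ⊆ S ∪ C → lam ≤ #(↑(⋂₀ t) : Type u) := by
    intro t ht hsub
    have hsplit : t = (t ∩ S) ∪ (t \ S) := by
      ext A; by_cases hA : A ∈ S <;> simp [hA]
    have h1 : lam ≤ #(↑(⋂₀ (t ∩ S)) : Type u) :=
      hS _ (ht.subset Set.inter_subset_left) Set.inter_subset_right
    have h2 : #(↑(⋂₀ (t \ S))ᶜ : Type u) < lam := by
      refine cosmall_sInter hlam (ht.subset Set.diff_subset) ?_
      intro A hA
      rcases hsub hA.1 with h | h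
      · exact absurd h hA.2
      · exact h
    have : ⋂₀ t = ⋂₀ (t ∩ S) ∩ ⋂₀ (t \ S) := by
      conv_lhs => rw [hsplit]
      exact Set.sInter_union _ _
    rw [this]
    exact big_inter_cosmall hlam h1 h2
  have hG : (Filter.generate (S ∪ C)).NeBot := by
    rw [Filter.generate_neBot_iff]
    intro t hsub ht
    have := (key t ht hsub).trans_lt' (lt_of_lt_of_le aleph0_pos hlam)
    exact Set.nonempty_coe_sort.mp (Cardinal.mk_ne_zero_iff.mp this.ne')
  refine ⟨Ultrafilter.of (Filter.generate (S ∪ C)), ?_, ?_⟩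
  · intro A hA
    refine le_antisymm (hZ ▸ Cardinal.mk_set_le A) ?_
    by_contra h
    push_neg at h
    have hAc : Aᶜ ∈ Ultrafilter.of (Filter.generate (S ∪ C)) := by
      apply Ultrafilter.of_le
      apply Filter.mem_generate_of_mem
      right
      show #(↑(Aᶜᶜ) : Type u) < lam
      rwa [compl_compl]
    have hempty : (∅ : Set Z) ∈ Ultrafilter.of (Filter.generate (S ∪ C)) := by
      have := Filter.inter_mem hA hAc
      rwa [Set.inter_compl_self] at this
    exact absurd hempty (Filter.empty_notMem _)
  · intro A hA
    exact Ultrafilter.of_le _ (Filter.mem_generate_of_mem (Or.inl hA))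

/-- The easy direction: a uniform `D` and `D`-pseudocompactness give complete
accumulation points of box families in the power. -/
lemma forward_dir {X : Type u} [TopologicalSpace X] {lam δ : Cardinal.{u}}
    (D : Ultrafilter lam.ord.ToType) (hD : ∀ A ∈ D, #A = lam)
    (hP : DPseudocompact (X := X) D)
    (Y : lam.ord.ToType → Set (δ.ord.ToType → X))
    (hY : ∀ i, Y i ∈ PowFamily {s : Set X | s.Nonempty ∧ IsOpen s} δ) :
    ∃ x, IsCompleteAccPt lam Y x := by
  classical
  choose f hf hYeq using hY
  have hlim : ∀ β, ∃ x, IsDLimit D (fun i => f i β) x := fun β => hP _ (fun i => hf i β)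
  choose x hx using hlim
  refine ⟨x, ?_⟩
  intro U hU
  rw [nhds_pi, Filter.mem_pi] at hU
  obtain ⟨I, hIfin, V, hV, hVU⟩ := hU
  have hmemD : {i | (Y i ∩ U).Nonempty} ∈ D := by
    have h1 : (⋂ β ∈ I, {i | ((f i β) ∩ V β).Nonempty}) ∈ D :=
      (Filter.biInter_mem hIfin).mpr fun β _ => hx β (V β) (hV β)
    refine Filter.mem_of_superset h1 ?_
    intro i hi
    simp only [Set.mem_iInter, Set.mem_setOf_eq] at hi
    have hne : ∀ β, ((f i β) ∩ (if β ∈ I then V β else Set.univ)).Nonempty := by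
      intro β
      by_cases hβ : β ∈ I
      · simpa [hβ] using hi β hβ
      · simpa [hβ] using (hf i β).1
    choose y hy using hne
    refine ⟨y, ?_, hVU ?_⟩
    · rw [hYeq i]
      exact fun β _ => (hy β).1
    · intro β hβ
      have := (hy β).2
      simpa [hβ] using this
  exact hD _ hmemD

theorem stmt14 {X : Type u} [TopologicalSpace X] (lam : Cardinal.{u})
    (hlam : Cardinal.aleph0 ≤ lam)
    (κ : Cardinal.{u})
    (hκ : κ = sInf {c : Cardinal.{u} |
      ∃ B : Set (Set X), TopologicalSpace.IsTopologicalBasis B ∧ #B = c})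
    (δ : Cardinal.{u})
    (hδ : δ = min ((2 : Cardinal.{u}) ^ ((2 : Cardinal.{u}) ^ lam)) (κ ^ lam)) :
    (∃ D : Ultrafilter lam.ord.ToType, (∀ A ∈ D, #A = lam) ∧ DPseudocompact (X := X) D) ↔
      ∀ Y : lam.ord.ToType → Set (δ.ord.ToType → X),
        (∀ i, Y i ∈ PowFamily {s : Set X | s.Nonempty ∧ IsOpen s} δ) →
        ∃ x : δ.ord.ToType → X, IsCompleteAccPt lam Y x := by
  classical
  constructor
  · rintro ⟨D, hD, hP⟩ Y hY
    exact forward_dir D hD hP Y hY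
  · intro hRHS
    by_contra hno
    push_neg at hno
    set Λ := lam.ord.ToType with hΛdef
    set Δ := δ.ord.ToType with hΔdef
    have hΛ : #Λ = lam := Cardinal.mk_ord_toType lam
    have hΔ : #Δ = δ := Cardinal.mk_ord_toType δ
    -- a basis of cardinality κ
    have hbasis_mem : κ ∈ {c : Cardinal.{u} |
        ∃ B : Set (Set X), TopologicalSpace.IsTopologicalBasis B ∧ #B = c} := by
      rw [hκ]
      exact csInf_mem ⟨#{s : Set X | IsOpen s}, {s : Set X | IsOpen s},
        TopologicalSpace.isTopologicalBasis_opens, rfl⟩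
    obtain ⟨B, hB, hBcard⟩ := hbasis_mem
    -- existence of a uniform ultrafilter
    obtain ⟨D0, hD0, -⟩ := exists_uniform hlam hΛ ∅ (by
      intro t ht hts
      rw [Set.subset_empty_iff.mp hts, Set.sInter_empty, Cardinal.mk_univ, hΛ])
    -- for every uniform ultrafilter there is a basic counterexample family
    have hfail : ∀ D : Ultrafilter Λ, (∀ A ∈ D, #A = lam) →
        ∃ O : Λ → Set X, (∀ α, O α ∈ B ∧ (O α).Nonempty) ∧ ∀ x, ¬ IsDLimit D O x := by
      intro D hD
      have hnp := hno D hD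
      rw [DPseudocompact, FDCompact] at hnp
      push_neg at hnp
      obtain ⟨O', hO', hnolim⟩ := hnp
      have hshrink : ∀ α, ∃ b, b ∈ B ∧ b.Nonempty ∧ b ⊆ O' α := by
        intro α
        obtain ⟨p, hp⟩ := (hO' α).1
        obtain ⟨b, hbB, hpb, hbsub⟩ := hB.exists_subset_of_mem_open hp (hO' α).2
        exact ⟨b, hbB, ⟨p, hpb⟩, hbsub⟩
      choose O hOB hOne hOsub using hshrink
      refine ⟨O, fun α => ⟨hOB α, hOne α⟩, ?_⟩
      intro x hxl
      refine hnolim x ?_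
      intro U hU
      refine Filter.mem_of_superset (hxl U hU) ?_
      rintro α ⟨p, hp1, hp2⟩
      exact ⟨p, hOsub α hp1, hp2⟩
    -- the set of chosen counterexamples
    have cex : ∀ E : {E : Ultrafilter Λ // ∀ A ∈ E, #A = lam},
        ∃ O : Λ → Set X, (∀ α, O α ∈ B ∧ (O α).Nonempty) ∧ ∀ x, ¬ IsDLimit E.1 O x :=
      fun E => hfail E.1 E.2
    choose cexf hcex1 hcex2 using cex
    set T : Set (Λ → Set X) := Set.range cexf with hTdef
    haveI hUUne : Nonempty {E : Ultrafilter Λ // ∀ A ∈ E, #A = lam} := ⟨⟨D0, hD0⟩⟩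
    haveI hTne : Nonempty ↥T := ⟨⟨cexf ⟨D0, hD0⟩, Set.mem_range_self _⟩⟩
    -- nonemptiness facts
    haveI hΛne : Nonempty Λ := Cardinal.mk_ne_zero_iff.mp
      (by rw [hΛ]; exact (aleph0_pos.trans_le hlam).ne')
    haveI hXne : Nonempty X := by
      obtain ⟨p, -⟩ := (hcex1 ⟨D0, hD0⟩ (Classical.arbitrary Λ)).2
      exact ⟨p⟩
    have hκpos : 1 ≤ κ := by
      rw [← hBcard]
      rw [Cardinal.one_le_iff_ne_zero, Cardinal.mk_ne_zero_iff]
      obtain ⟨b, hbB, -, -⟩ := hB.exists_subset_of_mem_open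
        (Set.mem_univ (Classical.arbitrary X)) isOpen_univ
      exact ⟨⟨b, hbB⟩⟩
    haveI hΔne : Nonempty Δ := by
      refine Cardinal.mk_ne_zero_iff.mp ?_
      rw [hΔ, hδ]
      have h1 : (0 : Cardinal.{u}) < 2 ^ ((2 : Cardinal.{u}) ^ lam) :=
        Cardinal.power_pos _ two_pos
      have h2 : (0 : Cardinal.{u}) < κ ^ lam :=
        Cardinal.power_pos _ (lt_of_lt_of_le one_pos hκpos)
      exact (lt_min h1 h2).ne'
    -- cardinality bounds on T
    have hT1 : #↥T ≤ 2 ^ ((2 : Cardinal.{u}) ^ lam) := by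
      have h1 : #↥T ≤ #{E : Ultrafilter Λ // ∀ A ∈ E, #A = lam} := Cardinal.mk_range_le
      have h2 : #{E : Ultrafilter Λ // ∀ A ∈ E, #A = lam} ≤ #(Ultrafilter Λ) :=
        Cardinal.mk_subtype_le _
      have h3 : #(Ultrafilter Λ) ≤ #(Set (Set Λ)) := by
        refine Cardinal.mk_le_of_injective
          (f := fun E : Ultrafilter Λ => (E : Filter Λ).sets) ?_
        intro E E' h
        exact Ultrafilter.coe_injective (Filter.filter_eq h)
      have h4 : #(Set (Set Λ)) = 2 ^ ((2 : Cardinal.{u}) ^ lam) := by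
        rw [Cardinal.mk_set, Cardinal.mk_set, hΛ]
      exact h4 ▸ (h1.trans (h2.trans h3))
    have hT2 : #↥T ≤ κ ^ lam := by
      have hTB : ∀ O : ↥T, ∀ α, O.1 α ∈ B := by
        rintro ⟨O, E, rfl⟩ α
        exact (hcex1 E α).1
      have h1 : #↥T ≤ #(Λ → ↥B) := by
        refine Cardinal.mk_le_of_injective
          (f := fun O : ↥T => fun α => (⟨O.1 α, hTB O α⟩ : ↥B)) ?_
        intro O O' h
        apply Subtype.ext
        funext α
        exact congrArg Subtype.val (congrFun h α)
      have h2 : #(Λ → ↥B) = κ ^ lam := by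
        rw [← Cardinal.power_def, hΛ, hBcard]
      exact h2 ▸ h1
    have hTδ : #↥T ≤ #Δ := by
      rw [hΔ, hδ]
      exact le_min hT1 hT2
    obtain ⟨emb⟩ := Cardinal.le_def _ _ |>.mp hTδ
    set g : Δ → ↥T := Function.invFun emb with hgdef
    have hg : ∀ t : ↥T, g (emb t) = t := Function.leftInverse_invFun emb.injective
    set gs : Δ → (Λ → Set X) := fun β => (g β).1 with hgsdef
    have hgsB : ∀ β α, gs β α ∈ B ∧ (gs β α).Nonempty := by
      intro β α
      obtain ⟨E, hE⟩ := (g β).2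
      have : gs β α = cexf E α := by
        show (g β).1 α = cexf E α
        rw [← hE]
      rw [this]
      exact hcex1 E α
    -- the box family in the power
    set Y : Λ → Set (Δ → X) := fun α => Set.pi Set.univ (fun β => gs β α) with hYdef
    have hYmem : ∀ α, Y α ∈ PowFamily {s : Set X | s.Nonempty ∧ IsOpen s} δ := by
      intro α
      exact ⟨fun β => gs β α,
        fun β => ⟨(hgsB β α).2, hB.isOpen (hgsB β α).1⟩, rfl⟩
    obtain ⟨x, hx⟩ := hRHS Y hYmem
    -- the trace family at x
    set SB : Set (Set Λ) :=
      {A | ∃ β V, IsOpen V ∧ x β ∈ V ∧ A = {α | (gs β α ∩ V).Nonempty}} with hSBdef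
    have hSfin : ∀ t : Set (Set Λ), t.Finite → t ⊆ SB → lam ≤ #(↑(⋂₀ t) : Type u) := by
      intro t ht hts
      have hts' : ∀ A, A ∈ t → ∃ β V, IsOpen V ∧ x β ∈ V ∧
          A = {α | (gs β α ∩ V).Nonempty} := fun A hA => hts hA
      choose! β V hVopen hxV hAeq using hts'
      have hN : (⋂ A ∈ t, (fun y : Δ → X => y (β A)) ⁻¹' (V A)) ∈ nhds x := by
        refine (Filter.biInter_mem ht).mpr ?_
        intro A hA
        exact ContinuousAt.preimage_mem_nhds (continuous_apply (β A)).continuousAt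
          ((hVopen A hA).mem_nhds (hxV A hA))
      have hcard := hx _ hN
      refine le_of_eq_of_le hcard.symm (Cardinal.mk_le_mk_of_subset ?_)
      rintro α ⟨y, hy1, hy2⟩
      intro A hA
      rw [hAeq A hA]
      refine ⟨y (β A), hy1 (β A) (Set.mem_univ _), ?_⟩
      exact Set.mem_iInter₂.mp hy2 A hA
    obtain ⟨D, hDuni, hDS⟩ := exists_uniform hlam hΛ SB hSfin
    -- D is uniform, so it has its chosen counterexample, which however has a D-limit
    set E : {E : Ultrafilter Λ // ∀ A ∈ E, #A = lam} := ⟨D, hDuni⟩ with hEdef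
    obtain ⟨βE, hβE⟩ : ∃ β, gs β = cexf E := by
      refine ⟨emb ⟨cexf E, Set.mem_range_self E⟩, ?_⟩
      show (g (emb ⟨cexf E, Set.mem_range_self E⟩)).1 = cexf E
      rw [hg]
    refine hcex2 E (x βE) ?_
    intro U hU
    obtain ⟨V, hVU, hVopen, hxV⟩ := mem_nhds_iff.mp hU
    have hmem : {α | (gs βE α ∩ V).Nonempty} ∈ D := hDS _ ⟨βE, V, hVopen, hxV, rfl⟩
    refine Filter.mem_of_superset hmem ?_
    rintro α ⟨p, hp1, hp2⟩
    refine ⟨p, ?_, hVU hp2⟩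
    rw [← hβE]
    exact hp1
end

section
/- Let λ be an infinite cardinal and K a set of infinite cardinals such that every uniform ultrafilter over λ is μ-decomposable for some μ ∈ K. Let X be a topological space and 𝓕 a family of subsets of X. If X is 𝓕-D-compact for some ultrafilter D uniform over λ, then there exist μ ∈ K and an ultrafilter D' uniform over μ such that X is 𝓕-D'-compact. -/
open Cardinal Set Topology

universe u v w

/-- `D` is `μ`-decomposable: some function to (the canonical set of size) `μ`
pushes `D` forward to a uniform ultrafilter over `μ`. -/
def Decomposable {Z : Type v} (D : Ultrafilter Z) (mu : Cardinal.{w}) : Prop :=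
  ∃ f : Z → mu.ord.ToType, ∀ A ∈ Ultrafilter.map f D, #A = mu

theorem stmt16 (lam : Cardinal.{u}) (hlam : Cardinal.aleph0 ≤ lam)
    (K : Set Cardinal.{u}) (hK : ∀ μ ∈ K, Cardinal.aleph0 ≤ μ)
    (hdec : ∀ D : Ultrafilter lam.ord.ToType, (∀ A ∈ D, #A = lam) →
      ∃ μ ∈ K, Decomposable D μ)
    {X : Type u} [TopologicalSpace X] (F : Set (Set X))
    (D : Ultrafilter lam.ord.ToType) (hD : ∀ A ∈ D, #A = lam) (h : FDCompact F D) :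
    ∃ μ ∈ K, ∃ D' : Ultrafilter μ.ord.ToType, (∀ A ∈ D', #A = μ) ∧ FDCompact F D' := by
  obtain ⟨μ, hμK, f, hf⟩ := hdec D hD
  refine ⟨μ, hμK, Ultrafilter.map f D, hf, ?_⟩
  intro Y hY
  obtain ⟨x, hx⟩ := h (fun z => Y (f z)) (fun z => hY (f z))
  exact ⟨x, fun U hU => hx U hU⟩
end

section
/- Let λ be a regular infinite cardinal. Then every ultrafilter uniform over the successor cardinal λ⁺ is λ-decomposable. -/
open Cardinal Set Topology

universe u v w

instance stmt17_instWO (o : Ordinal.{u}) : IsWellOrder o.ToType (· < ·) := isWellOrder_lt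

open Ordinal in
/-- Any subset of `lam.ord.ToType` of cardinality `< lam` is strictly bounded,
when `lam` is regular. -/
lemma stmt17_bound_aux {lam : Cardinal.{u}} (hlam : lam.IsRegular)
    (A : Set lam.ord.ToType) (hA : #A < lam) :
    ∃ w0 : lam.ord.ToType, ∀ a ∈ A, a < w0 := by
  have hord := Cardinal.isSuccLimit_ord hlam.aleph0_le
  set f : ↥A → Ordinal.{u} :=
    fun a => Order.succ (typein (α := lam.ord.ToType) (· < ·) a.1) with hf
  have hflt : ∀ a, f a < lam.ord := fun a => hord.succ_lt (typein_lt_self a.1)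
  have hsup : iSup f < lam.ord := Cardinal.iSup_lt_ord_of_isRegular hlam hA hflt
  have hsup' : iSup f < type (α := lam.ord.ToType) (· < ·) := by rwa [type_toType]
  refine ⟨enum (α := lam.ord.ToType) (· < ·) ⟨iSup f, hsup'⟩, fun a ha => ?_⟩
  have h1 : typein (α := lam.ord.ToType) (· < ·) a < iSup f :=
    lt_of_lt_of_le (Order.lt_succ _) (Ordinal.le_iSup f ⟨a, ha⟩)
  have h2 : typein (α := lam.ord.ToType) (· < ·)
      (enum (α := lam.ord.ToType) (· < ·) ⟨iSup f, hsup'⟩) = iSup f :=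
    typein_enum _ _
  exact (typein_lt_typein (α := lam.ord.ToType) (· < ·)).1 (by rw [h2]; exact h1)

theorem stmt17 (lam : Cardinal.{u}) (hlam : lam.IsRegular)
    (D : Ultrafilter (Order.succ lam).ord.ToType)
    (hD : ∀ A ∈ D, #A = Order.succ lam) :
    Decomposable D lam := by
  classical
  have hWcard : #lam.ord.ToType = lam := by rw [mk_toType, Cardinal.card_ord]
  have hZcard : #(Order.succ lam).ord.ToType = Order.succ lam := by
    rw [mk_toType, Cardinal.card_ord]
  haveI : Nonempty lam.ord.ToType := by
    rw [Ordinal.toType_nonempty_iff_ne_zero]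
    simp only [ne_eq, Cardinal.ord_eq_zero]
    exact hlam.pos.ne'
  by_contra hcon
  -- negation: every map to `lam.ord.ToType` pushes `D` to a non-uniform ultrafilter
  have hcon' : ∀ f : (Order.succ lam).ord.ToType → lam.ord.ToType,
      ∃ A : Set lam.ord.ToType, f ⁻¹' A ∈ D ∧ #A ≠ lam := by
    intro f
    by_contra h
    push_neg at h
    exact hcon ⟨f, fun A hA => h A ((Ultrafilter.mem_map).1 hA)⟩
  -- Step A: every map to `lam.ord.ToType` is bounded mod `D`
  have bddD : ∀ f : (Order.succ lam).ord.ToType → lam.ord.ToType,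
      ∃ w0 : lam.ord.ToType, {z | f z < w0} ∈ D := by
    intro f
    obtain ⟨A, hAD, hAne⟩ := hcon' f
    have hAlt : #A < lam := lt_of_le_of_ne (le_of_le_of_eq (mk_set_le A) hWcard) hAne
    obtain ⟨w0, hw0⟩ := stmt17_bound_aux hlam A hAlt
    exact ⟨w0, Filter.mem_of_superset hAD (fun z hz => hw0 _ hz)⟩
  -- Step B: tails are in `D`
  have tailD : ∀ z0 : (Order.succ lam).ord.ToType, {z | z0 < z} ∈ D := by
    intro z0
    have hIic : (Set.Iic z0) ∉ D := by
      intro hmem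
      have h1 : #(Set.Iic z0) = Order.succ lam := hD _ hmem
      have h2 : #(Set.Iic z0) ≤ lam := by
        have heq : Set.Iic z0 = insert z0 (Set.Iio z0) := by
          ext x; simp [le_iff_lt_or_eq, or_comm]
        rw [heq]
        calc #(insert z0 (Set.Iio z0) : Set (Order.succ lam).ord.ToType)
            ≤ #(Set.Iio z0) + 1 := Cardinal.mk_insert_le
          _ ≤ lam + lam := by
              refine add_le_add ?_ (le_trans (le_of_lt Cardinal.one_lt_aleph0) hlam.aleph0_le)
              exact Order.le_of_lt_succ (mk_Iio_ord_toType z0)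
          _ = lam := Cardinal.add_eq_self hlam.aleph0_le
      rw [h1] at h2
      exact absurd h2 (not_le.2 (Order.lt_succ lam))
    have hcompl := (Ultrafilter.compl_mem_iff_notMem (f := D)).2 hIic
    refine Filter.mem_of_superset hcompl ?_
    intro z hz
    simpa [Set.mem_compl_iff, not_le] using hz
  -- Step C: injections from initial segments into `lam.ord.ToType`
  have embE : ∀ z : (Order.succ lam).ord.ToType,
      Nonempty (↥(Set.Iio z) ↪ lam.ord.ToType) := by
    intro z
    rw [← Cardinal.le_def, hWcard]
    exact Order.le_of_lt_succ (mk_Iio_ord_toType z)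
  have E := fun z => Classical.choice (embE z)
  -- the functions `f_β`
  set fB : (Order.succ lam).ord.ToType → (Order.succ lam).ord.ToType → lam.ord.ToType :=
    fun β α => if h : β < α then E α ⟨β, h⟩ else Classical.arbitrary _ with hfB
  -- Step D: bounds `g β` for each `f_β`
  have hgex : ∀ β, ∃ w0, {α | fB β α < w0} ∈ D := fun β => bddD (fB β)
  choose g hg using hgex
  set X : (Order.succ lam).ord.ToType → Set (Order.succ lam).ord.ToType :=
    fun β => {α | β < α ∧ fB β α < g β} with hX
  have hXD : ∀ β, X β ∈ D := fun β => by
    have hmem := Filter.inter_mem (tailD β) (hg β)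
    exact Filter.mem_of_superset hmem (fun α hα => ⟨hα.1, hα.2⟩)
  -- Step E: pigeonhole, λ⁺-many `β` have `g β` below a fixed `w*`
  have pig : ∃ wstar : lam.ord.ToType, lam ≤ #{β | g β ≤ wstar} := by
    by_contra h
    push_neg at h
    have hcover : (Set.univ : Set (Order.succ lam).ord.ToType)
        = ⋃ w : lam.ord.ToType, {β | g β ≤ w} := by
      ext β
      simp only [Set.mem_univ, Set.mem_iUnion, Set.mem_setOf_eq, true_iff]
      exact ⟨g β, le_refl _⟩
    have h2 : (⨆ w : lam.ord.ToType, #{β | g β ≤ w}) ≤ lam := ciSup_le' fun w => (h w).le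
    have h3 : #(Order.succ lam).ord.ToType ≤ lam := by
      calc #(Order.succ lam).ord.ToType
          = #(Set.univ : Set (Order.succ lam).ord.ToType) := (Cardinal.mk_univ (α := (Order.succ lam).ord.ToType)).symm
        _ = #(⋃ w : lam.ord.ToType, {β | g β ≤ w}) := by rw [hcover]
        _ ≤ #lam.ord.ToType * ⨆ w : lam.ord.ToType, #{β | g β ≤ w} :=
            Cardinal.mk_iUnion_le _
        _ ≤ lam * lam := by rw [hWcard]; exact mul_le_mul_right h2 lam
        _ = lam := Cardinal.mul_eq_self hlam.aleph0_le
    rw [hZcard] at h3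
    exact absurd h3 (not_le.2 (Order.lt_succ lam))
  obtain ⟨wstar, hwstar⟩ := pig
  -- an injection `b` of `lam.ord.ToType` into `{β | g β ≤ wstar}`
  have hbex : Nonempty (lam.ord.ToType ↪ ↥{β | g β ≤ wstar}) := by
    rw [← Cardinal.le_def, hWcard]
    exact hwstar
  obtain ⟨b⟩ := hbex
  -- Step F: the diagonal function `d`
  have Tsmall : ∀ α : (Order.succ lam).ord.ToType,
      #{i : lam.ord.ToType | α ∈ X ((b i : ↥{β | g β ≤ wstar}) : (Order.succ lam).ord.ToType)}
        < lam := by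
    intro α
    set T : Set lam.ord.ToType :=
      {i | α ∈ X ((b i : ↥{β | g β ≤ wstar}) : (Order.succ lam).ord.ToType)} with hT
    have hinj : ∃ φ : ↥T → ↥(Set.Iio wstar), Function.Injective φ := by
      refine ⟨fun i => ⟨fB ((b i.1 : ↥{β | g β ≤ wstar}) : (Order.succ lam).ord.ToType) α, ?_⟩,
        ?_⟩
      · have hi : ((b i.1 : ↥{β | g β ≤ wstar}) : (Order.succ lam).ord.ToType) < α ∧
            fB ((b i.1 : ↥{β | g β ≤ wstar}) : (Order.succ lam).ord.ToType) α
              < g ((b i.1 : ↥{β | g β ≤ wstar}) : (Order.succ lam).ord.ToType) := i.2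
        exact lt_of_lt_of_le hi.2 (b i.1).2
      · intro i j hij
        simp only [Subtype.mk_eq_mk] at hij
        have hi : ((b i.1 : ↥{β | g β ≤ wstar}) : (Order.succ lam).ord.ToType) < α ∧
            fB ((b i.1 : ↥{β | g β ≤ wstar}) : (Order.succ lam).ord.ToType) α
              < g ((b i.1 : ↥{β | g β ≤ wstar}) : (Order.succ lam).ord.ToType) := i.2
        have hj : ((b j.1 : ↥{β | g β ≤ wstar}) : (Order.succ lam).ord.ToType) < α ∧
            fB ((b j.1 : ↥{β | g β ≤ wstar}) : (Order.succ lam).ord.ToType) α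
              < g ((b j.1 : ↥{β | g β ≤ wstar}) : (Order.succ lam).ord.ToType) := j.2
        simp only [hfB] at hij
        simp only [dif_pos hi.1, dif_pos hj.1, Subtype.mk.injEq] at hij
        have hEeq := (E α).injective hij
        have hval := congrArg Subtype.val hEeq
        exact Subtype.ext (b.injective (Subtype.ext hval))
    obtain ⟨φ, hφ⟩ := hinj
    calc #T ≤ #(Set.Iio wstar) := Cardinal.mk_le_of_injective hφ
      _ < lam := mk_Iio_ord_toType wstar
  have hdex : ∀ α : (Order.succ lam).ord.ToType, ∃ w0 : lam.ord.ToType,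
      ∀ i ∈ {i : lam.ord.ToType |
        α ∈ X ((b i : ↥{β | g β ≤ wstar}) : (Order.succ lam).ord.ToType)}, i < w0 :=
    fun α => stmt17_bound_aux hlam _ (Tsmall α)
  choose d hd using hdex
  -- Step G: contradiction
  obtain ⟨w1, hw1⟩ := bddD d
  have hX1 : X ((b w1 : ↥{β | g β ≤ wstar}) : (Order.succ lam).ord.ToType) ∈ D := hXD _
  have hboth := Filter.inter_mem hX1 hw1
  obtain ⟨α, hα1, hα2⟩ := Filter.nonempty_of_mem hboth
  have hlt : w1 < d α := hd α w1 hα1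
  exact absurd hα2 (not_lt.2 hlt.le)
end
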